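/- Let b₀ > 0 and s₀ ∈ ℝ be constants and let A: I → (0,∞) be twice differentiable on an open interval I ⊆ (0,∞) satisfying A''(r)/A(r) = 2·(A'(r)/A(r))² − (2b₀²r³/(b₀²r⁴ + s₀²))·(A'(r)/A(r)) on I. Then the function r ↦ √(b₀²r⁴ + s₀²)·A'(r)/A(r)² is constant on I; equivalently, (1/A)'(r) = c_{a1}/√(b₀²r⁴ + s₀²) for some constant c_{a1}. -/

import Mathlib

open Real Set

/-- Let `b₀ > 0`, `s₀ ∈ ℝ`, and `A : (a,b) → (0,∞)` (with `(a,b) ⊆ (0,∞)`)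
twice differentiable, satisfying
`A''/A = 2(A'/A)² − (2b₀²r³/(b₀²r⁴+s₀²))·(A'/A)`.
Then `r ↦ √(b₀²r⁴ + s₀²)·A'/A²` is constant on `(a,b)`; equivalently,
`(1/A)' = c_{a1}/√(b₀²r⁴ + s₀²)` for some constant `c_{a1}`. -/
theorem E_zero_branch_A_equation
    (a b b₀ s₀ : ℝ) (ha : 0 ≤ a) (hb₀ : 0 < b₀)
    (A : ℝ → ℝ)
    (hApos : ∀ r ∈ Ioo a b, 0 < A r)
    (hAdiff : ∀ r ∈ Ioo a b, DifferentiableAt ℝ A r)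
    (hAdiff2 : ∀ r ∈ Ioo a b, DifferentiableAt ℝ (deriv A) r)
    (heom : ∀ r ∈ Ioo a b,
      deriv (deriv A) r / A r
        = 2 * (deriv A r / A r) ^ 2
          - 2 * b₀ ^ 2 * r ^ 3 / (b₀ ^ 2 * r ^ 4 + s₀ ^ 2) * (deriv A r / A r)) :
    ∃ c : ℝ,
      (∀ r ∈ Ioo a b,
        Real.sqrt (b₀ ^ 2 * r ^ 4 + s₀ ^ 2) * deriv A r / A r ^ 2 = c) ∧
      (∀ r ∈ Ioo a b,
        deriv (fun s => 1 / A s) r = -c / Real.sqrt (b₀ ^ 2 * r ^ 4 + s₀ ^ 2)) := by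
  set F : ℝ → ℝ := fun r => Real.sqrt (b₀ ^ 2 * r ^ 4 + s₀ ^ 2) * deriv A r / A r ^ 2 with hF
  have hQpos : ∀ r ∈ Ioo a b, 0 < b₀ ^ 2 * r ^ 4 + s₀ ^ 2 := by
    intro r hr
    have hr0 : 0 < r := lt_of_le_of_lt ha hr.1
    positivity
  have hkey : ∀ x ∈ Ioo a b, HasDerivAt F 0 x := by
    intro x hx
    have hq := hQpos x hx
    have hs : 0 < Real.sqrt (b₀ ^ 2 * x ^ 4 + s₀ ^ 2) := Real.sqrt_pos.mpr hq
    have hv : 0 < A x := hApos x hx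
    have hA' : HasDerivAt A (deriv A x) x := (hAdiff x hx).hasDerivAt
    have hA'' : HasDerivAt (deriv A) (deriv (deriv A) x) x := (hAdiff2 x hx).hasDerivAt
    have hQ : HasDerivAt (fun r => b₀ ^ 2 * r ^ 4 + s₀ ^ 2) (b₀ ^ 2 * (4 * x ^ 3)) x := by
      simpa using (((hasDerivAt_pow 4 x).const_mul (b₀ ^ 2)).add_const (s₀ ^ 2))
    have hg : HasDerivAt (fun r => Real.sqrt (b₀ ^ 2 * r ^ 4 + s₀ ^ 2))
        (b₀ ^ 2 * (4 * x ^ 3) / (2 * Real.sqrt (b₀ ^ 2 * x ^ 4 + s₀ ^ 2))) x :=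
      hQ.sqrt (ne_of_gt hq)
    have hpow : HasDerivAt (fun r => A r ^ 2) (2 * A x ^ 1 * deriv A x) x := by
      simpa using hA'.fun_pow 2
    have hD := (hg.mul hA'').div hpow (by positivity)
    have h := heom x hx
    rw [div_eq_iff (ne_of_gt hv)] at h
    have heq : deriv (deriv A) x
        = 2 * (deriv A x) ^ 2 / A x
          - 2 * b₀ ^ 2 * x ^ 3 / (b₀ ^ 2 * x ^ 4 + s₀ ^ 2) * deriv A x := by
      rw [h]; field_simp
    have hsq : Real.sqrt (b₀ ^ 2 * x ^ 4 + s₀ ^ 2) ^ 2 = b₀ ^ 2 * x ^ 4 + s₀ ^ 2 :=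
      Real.sq_sqrt hq.le
    have hval : ((b₀ ^ 2 * (4 * x ^ 3) / (2 * Real.sqrt (b₀ ^ 2 * x ^ 4 + s₀ ^ 2)) * deriv A x
          + Real.sqrt (b₀ ^ 2 * x ^ 4 + s₀ ^ 2) * deriv (deriv A) x) * A x ^ 2
          - Real.sqrt (b₀ ^ 2 * x ^ 4 + s₀ ^ 2) * deriv A x * (2 * A x * deriv A x))
          / (A x ^ 2) ^ 2 = 0 := by
      rw [heq]
      field_simp
      linear_combination (-4 * deriv A x * b₀ ^ 2 * x ^ 3 * A x) * hsq
    have hD0 : HasDerivAt (fun y => Real.sqrt (b₀ ^ 2 * y ^ 4 + s₀ ^ 2) * deriv A y / A y ^ 2)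
        0 x := by
      simpa [hval, Pi.mul_def, Pi.div_def] using hD
    exact hD0
  have hderivzero : ∀ x ∈ Ioo a b, fderivWithin ℝ F (Ioo a b) x = 0 := by
    intro x hx
    have h0 : HasFDerivAt F (ContinuousLinearMap.smulRight (1 : ℝ →L[ℝ] ℝ) 0) x :=
      (hkey x hx).hasFDerivAt
    rw [fderivWithin_of_isOpen isOpen_Ioo hx, h0.fderiv]
    ext y
    simp
  have hdiff : DifferentiableOn ℝ F (Ioo a b) := fun x hx =>
    ((hkey x hx).differentiableAt).differentiableWithinAt
  by_cases hab : a < b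
  · set x₀ := (a + b) / 2 with hx₀def
    have hx₀ : x₀ ∈ Ioo a b := ⟨by linarith, by linarith⟩
    refine ⟨F x₀, fun r hr => ?_, fun r hr => ?_⟩
    · exact (convex_Ioo a b).is_const_of_fderivWithin_eq_zero hdiff hderivzero hr hx₀
    · have hc : F r = F x₀ :=
        (convex_Ioo a b).is_const_of_fderivWithin_eq_zero hdiff hderivzero hr hx₀
      have hv : 0 < A r := hApos r hr
      have hs : 0 < Real.sqrt (b₀ ^ 2 * r ^ 4 + s₀ ^ 2) := Real.sqrt_pos.mpr (hQpos r hr)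
      have hA' : HasDerivAt A (deriv A r) r := (hAdiff r hr).hasDerivAt
      have hinv : HasDerivAt (fun s => 1 / A s)
          ((0 * A r - 1 * deriv A r) / A r ^ 2) r :=
        (hasDerivAt_const r (1 : ℝ)).div hA' (ne_of_gt hv)
      rw [hinv.deriv, ← hc]
      show (0 * A r - 1 * deriv A r) / A r ^ 2
        = -(Real.sqrt (b₀ ^ 2 * r ^ 4 + s₀ ^ 2) * deriv A r / A r ^ 2)
          / Real.sqrt (b₀ ^ 2 * r ^ 4 + s₀ ^ 2)
      field_simp
      ring
  · refine ⟨0, fun r hr => absurd hr ?_, fun r hr => absurd hr ?_⟩ <;>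
      simp [Ioo_eq_empty hab]
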